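/- Let C = (L_1, L_2, ...) be a countable collection of languages and run Procedure 1 on it. For every i ≥ 1, when C(L_i) and m*(L_i) are determined at the end of iteration i, the subcollection C(L_i) is either empty, or it contains at least one language L_j ≠ L_i with j < i; furthermore, every language L_j ≠ L_i belonging to C(L_i) satisfies m*(L_j) < m*(L_i). -/

import Mathlib

/-- A valid subcollection for the check in Procedure 1: a finite set `s` of language
indices drawn from the prefix `pre` (or equal to `last`), which contains `last`, and
whose intersection `⋂ k ∈ s, L k` is finite. -/
def ValidSub (L : ℕ → Set ℕ) (pre : List ℕ) (last : ℕ) (s : Finset ℕ) : Prop :=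
  last ∈ s ∧ (∀ k ∈ s, k = last ∨ k ∈ pre) ∧ (⋂ k ∈ s, L k).Finite

/-- `m` is the value `m_chk` computed in the while loop of Procedure 1 for the prefix
`pre` followed by the language `last`: the largest size of a finite intersection of a
subcollection containing `last` (and `0` if no such subcollection exists). -/
def IsMchk (L : ℕ → Set ℕ) (pre : List ℕ) (last : ℕ) (m : ℕ) : Prop :=
  ((¬ ∃ s, ValidSub L pre last s) ∧ m = 0) ∨
    ((∃ s, ValidSub L pre last s ∧ (⋂ k ∈ s, L k).ncard = m) ∧
      ∀ s, ValidSub L pre last s → (⋂ k ∈ s, L k).ncard ≤ m)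

/-- `s` is a witness subcollection `C_chk` realizing `m = m_chk` (with `s = ∅`, `m = 0`
if no valid subcollection exists). -/
def WitnessAt (L : ℕ → Set ℕ) (pre : List ℕ) (last : ℕ) (s : Finset ℕ) (m : ℕ) : Prop :=
  ((¬ ∃ s', ValidSub L pre last s') ∧ s = ∅ ∧ m = 0) ∨
    (ValidSub L pre last s ∧ (⋂ k ∈ s, L k).ncard = m ∧
      ∀ s', ValidSub L pre last s' → (⋂ k ∈ s', L k).ncard ≤ m)

/-- A run of Procedure 1 (insertion sort for non-uniform generation) on the collection
`L 0, L 1, L 2, ...` (0-based indexing: `L i` is the paper's `L_{i+1}`).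
`ord i` is the ordering `C'_i` (a list of original indices, a permutation of
`0, ..., i-1`), `pos i` is the (0-based) position at which language `i` is finally
inserted during iteration `i`, `wit i` is the witness subcollection `C(L_i)` (a finite
set of original indices) and `mstar i` is the non-uniform complexity `m*(L_i)`. -/
structure Proc1Run (L : ℕ → Set ℕ) where
  ord : ℕ → List ℕ
  pos : ℕ → ℕ
  wit : ℕ → Finset ℕ
  mstar : ℕ → ℕ
  ord_zero : ord 0 = []
  pos_le : ∀ i, pos i ≤ i
  /-- `C'_{i+1}` is obtained from `C'_i` by inserting language `i` at position `pos i`. -/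
  ord_succ : ∀ i, ord (i + 1) = (ord i).take (pos i) ++ i :: (ord i).drop (pos i)
  /-- While moving language `i` forward through each intermediate position `q` with
  `pos i < q ≤ i`, the while loop did not break: the value `m_chk` computed there was
  at most `m*` of the preceding language. -/
  moved : ∀ i q, pos i < q → q ≤ i →
    ∀ m, IsMchk L ((ord i).take q) i m → m ≤ mstar ((ord i).getD (q - 1) 0)
  /-- At the final position the while loop broke: either `j ≤ 1` or `m_chk > m*` of the
  preceding language. -/
  stopped : ∀ i, pos i = 0 ∨ mstar ((ord i).getD (pos i - 1) 0) < mstar i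
  /-- `C(L_i)` and `m*(L_i)` are the witness subcollection and maximal value computed at
  the final position. -/
  wit_spec : ∀ i, WitnessAt L ((ord i).take (pos i)) i (wit i) (mstar i)

lemma exists_mchk (L : ℕ → Set ℕ) (pre : List ℕ) (last : ℕ) :
    ∃ m, IsMchk L pre last m := by
  by_cases h : ∃ s, ValidSub L pre last s
  · have hfin : {s : Finset ℕ | ValidSub L pre last s}.Finite := by
      apply Set.Finite.subset (Finset.finite_toSet (insert last pre.toFinset).powerset)
      intro s hs
      simp only [Finset.coe_powerset, Set.mem_setOf_eq, Set.mem_preimage,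
        Set.mem_powerset_iff] at *
      intro k hk
      rcases hs.2.1 k hk with rfl | hk'
      · exact Finset.mem_insert_self _ _
      · exact Finset.mem_insert_of_mem (List.mem_toFinset.2 hk')
    obtain ⟨a, ha, hmax⟩ := Set.Finite.exists_maximalFor
      (fun s : Finset ℕ => (⋂ k ∈ s, L k).ncard) _ hfin h
    refine ⟨(⋂ k ∈ a, L k).ncard, Or.inr ⟨⟨a, ha, rfl⟩, ?_⟩⟩
    intro s hs
    by_contra hc
    push_neg at hc
    exact absurd (hmax hs hc.le) (Nat.not_le.2 hc)
  · exact ⟨0, Or.inl ⟨h, rfl⟩⟩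

lemma isMchk_mono (L : ℕ → Set ℕ) {pre1 pre2 : List ℕ} {last m1 m2 : ℕ}
    (hsub : ∀ x ∈ pre1, x ∈ pre2)
    (h1 : IsMchk L pre1 last m1) (h2 : IsMchk L pre2 last m2) : m1 ≤ m2 := by
  rcases h1 with ⟨_, rfl⟩ | ⟨⟨s, hs, hcard⟩, _⟩
  · exact Nat.zero_le _
  · have hv2 : ValidSub L pre2 last s :=
      ⟨hs.1, fun k hk => (hs.2.1 k hk).imp id (hsub k), hs.2.2⟩
    rcases h2 with ⟨hno, _⟩ | ⟨_, hmax⟩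
    · exact absurd ⟨s, hv2⟩ hno
    · exact hcard ▸ hmax s hv2

lemma witness_isMchk {L : ℕ → Set ℕ} {pre : List ℕ} {last : ℕ} {s : Finset ℕ} {m : ℕ}
    (h : WitnessAt L pre last s m) : IsMchk L pre last m := by
  rcases h with ⟨h1, _, h3⟩ | ⟨h1, h2, h3⟩
  · exact Or.inl ⟨h1, h3⟩
  · exact Or.inr ⟨⟨s, h1, h2⟩, h3⟩

variable {L : ℕ → Set ℕ}

lemma ord_length (R : Proc1Run L) : ∀ i, (R.ord i).length = i := by
  intro i
  induction i with
  | zero => simp [R.ord_zero]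
  | succ n ih =>
    have := R.pos_le n
    rw [R.ord_succ n]
    simp [ih]
    omega

lemma ord_mem_lt (R : Proc1Run L) : ∀ i, ∀ j ∈ R.ord i, j < i := by
  intro i
  induction i with
  | zero => simp [R.ord_zero]
  | succ n ih =>
    intro j hj
    rw [R.ord_succ n] at hj
    rcases List.mem_append.1 hj with h | h
    · exact Nat.lt_succ_of_lt (ih j (List.take_subset _ _ h))
    · rcases List.mem_cons.1 h with rfl | h
      · exact Nat.lt_succ_self _
      · exact Nat.lt_succ_of_lt (ih j (List.drop_subset _ _ h))

/-- Everything in the final prefix has strictly smaller `mstar` than the inserted `n`,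
assuming `ord n` is pairwise-sorted by `mstar`. -/
lemma take_lt (R : Proc1Run L) (n : ℕ)
    (hpair : (R.ord n).Pairwise (fun a b => R.mstar a ≤ R.mstar b)) :
    ∀ a ∈ (R.ord n).take (R.pos n), R.mstar a < R.mstar n := by
  intro a ha
  have hlen : (R.ord n).length = n := ord_length R n
  have hple := R.pos_le n
  have hpos : R.pos n ≠ 0 := by
    intro h; rw [h] at ha; simp at ha
  obtain ⟨k, hk⟩ : ∃ k, R.pos n = k + 1 := ⟨R.pos n - 1, by omega⟩
  have hkn : k < (R.ord n).length := by omega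
  have hstop := (R.stopped n).resolve_left hpos
  have hgd : (R.ord n).getD (R.pos n - 1) 0 = (R.ord n).get ⟨k, hkn⟩ := by
    rw [hk]
    simp [List.getD_eq_getElem?_getD, List.getElem?_eq_getElem hkn]
  rw [hgd] at hstop
  have hts : (R.ord n).take (k+1) = (R.ord n).take k ++ [(R.ord n).get ⟨k, hkn⟩] := by
    rw [List.take_succ]
    simp [List.getElem?_eq_getElem hkn]
  rw [hk, hts] at ha
  rcases List.mem_append.1 ha with ha | ha
  · have hsub : ((R.ord n).take (k+1)).Pairwise (fun a b => R.mstar a ≤ R.mstar b) :=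
      hpair.sublist (List.take_sublist _ _)
    rw [hts] at hsub
    have := (List.pairwise_append.1 hsub).2.2 a ha _ (List.mem_singleton_self _)
    omega
  · rw [List.mem_singleton.1 ha]
    exact hstop

/-- Everything in the final drop has `mstar` at least `mstar n`. -/
lemma drop_le (R : Proc1Run L) (n : ℕ) :
    ∀ b ∈ (R.ord n).drop (R.pos n), R.mstar n ≤ R.mstar b := by
  intro b hb
  have hlen : (R.ord n).length = n := ord_length R n
  have hple := R.pos_le n
  obtain ⟨q, hq, hqlt, hget⟩ : ∃ q, R.pos n ≤ q ∧ q < (R.ord n).length ∧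
      (R.ord n).getD q 0 = b := by
    obtain ⟨⟨j, hj⟩, rfl⟩ := List.mem_iff_get.1 hb
    have hjlen : R.pos n + j < (R.ord n).length := by
      simp [List.length_drop] at hj; omega
    refine ⟨R.pos n + j, Nat.le_add_right _ _, hjlen, ?_⟩
    rw [List.getD_eq_getElem?_getD, List.getElem?_eq_getElem hjlen]
    simp [List.getElem_drop]
  obtain ⟨m, hm⟩ := exists_mchk L ((R.ord n).take (q+1)) n
  have h1 := R.moved n (q+1) (by omega) (by omega) m hm
  simp only [Nat.add_sub_cancel] at h1
  rw [hget] at h1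
  have h2 : R.mstar n ≤ m := by
    refine isMchk_mono L ?_ (witness_isMchk (R.wit_spec n)) hm
    intro x hx
    have heq : (R.ord n).take (R.pos n) = ((R.ord n).take (q+1)).take (R.pos n) := by
      rw [List.take_take, min_eq_left (by omega)]
    rw [heq] at hx
    exact List.take_subset _ _ hx
  omega

lemma ord_pairwise (R : Proc1Run L) :
    ∀ i, (R.ord i).Pairwise (fun a b => R.mstar a ≤ R.mstar b) := by
  intro i
  induction i with
  | zero => simp [R.ord_zero]
  | succ n ih =>
    rw [R.ord_succ n, List.pairwise_append]
    refine ⟨ih.sublist (List.take_sublist _ _), ?_, ?_⟩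
    · rw [List.pairwise_cons]
      exact ⟨fun b hb => drop_le R n b hb, ih.sublist (List.drop_sublist _ _)⟩
    · intro a ha b hb
      rcases List.mem_cons.1 hb with rfl | hb
      · exact (take_lt R b ih a ha).le
      · have hpa : ((R.ord n).take (R.pos n) ++ (R.ord n).drop (R.pos n)).Pairwise
            (fun a b => R.mstar a ≤ R.mstar b) := by
          rw [List.take_append_drop]; exact ih
        exact (List.pairwise_append.1 hpa).2.2 a ha b hb

/-- Observation 3.2: languages in the witness have smaller complexity.
For every `i`, the witness subcollection `C(L_i)` is either empty or contains some
language `L j ≠ L i` with `j < i`; moreover every language `L j ≠ L i` in `C(L_i)`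
satisfies `m*(L_j) < m*(L_i)`. (0-based indexing.) -/
theorem stmt_0 (L : ℕ → Set ℕ) (hL : ∀ i, (L i).Infinite) (R : Proc1Run L) (i : ℕ) :
    (R.wit i = ∅ ∨ ∃ j ∈ R.wit i, j < i ∧ L j ≠ L i) ∧
      ∀ j ∈ R.wit i, L j ≠ L i → R.mstar j < R.mstar i := by
  rcases R.wit_spec i with ⟨_, hwe, _⟩ | ⟨hv, _, _⟩
  · exact ⟨Or.inl hwe, fun j hj => absurd (hwe ▸ hj) (Finset.notMem_empty j)⟩
  obtain ⟨hlast, hmem, hfin⟩ := hv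
  have key : ∀ j ∈ R.wit i, L j ≠ L i → R.mstar j < R.mstar i := by
    intro j hj hne
    have hji : j ≠ i := fun h => hne (h ▸ rfl)
    have hjpre : j ∈ (R.ord i).take (R.pos i) := (hmem j hj).resolve_left hji
    exact take_lt R i (ord_pairwise R i) j hjpre
  refine ⟨?_, key⟩
  by_cases h : ∃ j ∈ R.wit i, L j ≠ L i
  · obtain ⟨j, hj, hne⟩ := h
    have hji : j ≠ i := fun h => hne (h ▸ rfl)
    have hjpre : j ∈ (R.ord i).take (R.pos i) := (hmem j hj).resolve_left hji
    exact Or.inr ⟨j, hj, ord_mem_lt R i j (List.take_subset _ _ hjpre), hne⟩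
  · push_neg at h
    exfalso
    have heq : (⋂ k ∈ R.wit i, L k) = L i := by
      ext x
      simp only [Set.mem_iInter]
      constructor
      · intro hx; exact hx i hlast
      · intro hx k hk
        rw [h k hk]; exact hx
    exact hL i (heq ▸ hfin)
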